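/- (Graph Drawing Lemma) Suppose ∑_{i=1}^k ũ_iᵀ A ũ_i − ∑_{i=1}^k λ_i(A) < ε for some ε > 0. Then ‖Π_Ψ − Π_{Ψ̃}‖₂ < √(2ε / (λ_{k+1}(A) − λ_k(A))), where ‖·‖₂ is the spectral (operator 2-) norm. -/

import Mathlib

open Matrix Finset

noncomputable def eNorm {d : ℕ} (x : Fin d → ℝ) : ℝ :=
  Real.sqrt (x ⬝ᵥ x)

noncomputable def specNorm {d : ℕ} (A : Matrix (Fin d) (Fin d) ℝ) : ℝ :=
  sSup { c : ℝ | ∃ x : Fin d → ℝ, x ≠ 0 ∧ c = eNorm (A *ᵥ x) / eNorm x }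

lemma specNorm_le_frob {d : ℕ} (hd : 0 < d) (M : Matrix (Fin d) (Fin d) ℝ) :
    specNorm M ≤ Real.sqrt (∑ s, ∑ t, (M s t)^2) := by
  have hF : (0:ℝ) ≤ ∑ s, ∑ t, (M s t)^2 := by positivity
  apply csSup_le
  · exact ⟨_, fun _ => 1, by
      intro h
      have := congrFun h ⟨0, hd⟩
      simp at this, rfl⟩
  · rintro c ⟨x, hx, rfl⟩
    have hxx : 0 < x ⬝ᵥ x := by
      have hnn : (0:ℝ) ≤ x ⬝ᵥ x := by
        exact Finset.sum_nonneg fun i _ => mul_self_nonneg _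
      rcases lt_or_eq_of_le hnn with h | h
      · exact h
      · exact absurd (dotProduct_self_eq_zero.mp h.symm) hx
    have hex : 0 < eNorm x := Real.sqrt_pos.mpr hxx
    rw [div_le_iff₀ hex]
    have key : (M *ᵥ x) ⬝ᵥ (M *ᵥ x) ≤ (∑ s, ∑ t, (M s t)^2) * (x ⬝ᵥ x) := by
      have : ∀ s : Fin d, ((M *ᵥ x) s)^2 ≤ (∑ t, (M s t)^2) * (∑ t, (x t)^2) := by
        intro s
        simpa [Matrix.mulVec, dotProduct] using
          Finset.sum_mul_sq_le_sq_mul_sq Finset.univ (fun t => M s t) x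
      calc (M *ᵥ x) ⬝ᵥ (M *ᵥ x) = ∑ s, ((M *ᵥ x) s)^2 := by
            simp [dotProduct, sq]
        _ ≤ ∑ s, (∑ t, (M s t)^2) * (∑ t, (x t)^2) := Finset.sum_le_sum (fun s _ => this s)
        _ = (∑ s, ∑ t, (M s t)^2) * (x ⬝ᵥ x) := by
            rw [← Finset.sum_mul]; congr 1; simp [dotProduct, sq]
    calc eNorm (M *ᵥ x) = Real.sqrt ((M *ᵥ x) ⬝ᵥ (M *ᵥ x)) := rfl
      _ ≤ Real.sqrt ((∑ s, ∑ t, (M s t)^2) * (x ⬝ᵥ x)) := Real.sqrt_le_sqrt key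
      _ = Real.sqrt (∑ s, ∑ t, (M s t)^2) * eNorm x := by
          rw [Real.sqrt_mul hF]; rfl

theorem stmt2 {d : ℕ} (hd : 2 ≤ d)
    (A : Matrix (Fin d) (Fin d) ℝ)
    (hA_symm : Aᵀ = A)
    (hA_psd : ∀ x : Fin d → ℝ, 0 ≤ x ⬝ᵥ (A *ᵥ x))
    (lam : Fin d → ℝ) (u : Fin d → Fin d → ℝ)
    (hlam_mono : Monotone lam)
    (hlam_zero : lam ⟨0, by omega⟩ = 0)
    (hlam2_pos : 0 < lam ⟨1, by omega⟩)
    (h_eig : ∀ i, A *ᵥ u i = lam i • u i)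
    (h_orth : ∀ i j, (u i) ⬝ᵥ (u j) = if i = j then 1 else 0)
    (k : ℕ) (hk1 : 1 ≤ k) (hkd : k < d)
    (hgap : lam ⟨k - 1, by omega⟩ < lam ⟨k, hkd⟩)
    (utld : Fin k → Fin d → ℝ)
    (h_orth' : ∀ i j, (utld i) ⬝ᵥ (utld j) = if i = j then 1 else 0)
    (ε : ℝ) (hε : 0 < ε)
    (hgdo : ∑ i, (utld i) ⬝ᵥ (A *ᵥ utld i)
        - ∑ i : Fin k, lam (Fin.castLE hkd.le i) < ε)
    (Ψ : Matrix (Fin d) (Fin k) ℝ)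
    (hΨ : Ψ = Matrix.of fun s i => u (Fin.castLE hkd.le i) s)
    (Ψt : Matrix (Fin d) (Fin k) ℝ)
    (hΨt : Ψt = Matrix.of fun s i => utld i s) :
    specNorm (Ψ * Ψᵀ - Ψt * Ψtᵀ)
      < Real.sqrt (2 * ε / (lam ⟨k, hkd⟩ - lam ⟨k - 1, by omega⟩)) := by
  have hkd' : k - 1 < d := by omega
  set lamk := lam ⟨k, hkd⟩ with hlamk
  set lamkm := lam ⟨k - 1, hkd'⟩ with hlamkm
  have hgappos : 0 < lamk - lamkm := by exact sub_pos.mpr hgap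
  -- the orthogonal matrix U with rows u i
  set U : Matrix (Fin d) (Fin d) ℝ := Matrix.of (fun i s => u i s) with hU
  have hUUt : U * Uᵀ = 1 := by
    ext i j
    simpa [hU, Matrix.mul_apply, Matrix.one_apply, dotProduct] using h_orth i j
  have hUtU : Uᵀ * U = 1 := mul_eq_one_comm.mp hUUt
  have hUiso : ∀ x : Fin d → ℝ, (U *ᵥ x) ⬝ᵥ (U *ᵥ x) = x ⬝ᵥ x := by
    intro x
    calc (U *ᵥ x) ⬝ᵥ (U *ᵥ x) = x ⬝ᵥ (Uᵀ *ᵥ (U *ᵥ x)) := by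
          conv_rhs => rw [Matrix.dotProduct_mulVec, Matrix.vecMul_transpose]
      _ = x ⬝ᵥ ((Uᵀ * U) *ᵥ x) := by rw [← Matrix.mulVec_mulVec]
      _ = x ⬝ᵥ x := by rw [hUtU, Matrix.one_mulVec]
  -- spectral decomposition
  have hAU : A * Uᵀ = Uᵀ * Matrix.diagonal lam := by
    ext s j
    have he := congrFun (h_eig j) s
    simp only [Matrix.mulVec, dotProduct, Pi.smul_apply, smul_eq_mul] at he
    simp only [Matrix.mul_apply, Matrix.transpose_apply, hU, Matrix.of_apply,
      Matrix.diagonal_apply]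
    simp only [mul_ite, mul_zero]
    rw [Finset.sum_ite_eq' Finset.univ j (fun t => u t s * lam t)]
    simp only [Finset.mem_univ, if_true]
    rw [he]; ring
  have hAfact : A = Uᵀ * Matrix.diagonal lam * U := by
    calc A = A * (Uᵀ * U) := by rw [hUtU, Matrix.mul_one]
      _ = (A * Uᵀ) * U := by rw [Matrix.mul_assoc]
      _ = Uᵀ * Matrix.diagonal lam * U := by rw [hAU]
  have hquad : ∀ x : Fin d → ℝ, x ⬝ᵥ (A *ᵥ x) = ∑ j, lam j * ((U *ᵥ x) j)^2 := by
    intro x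
    calc x ⬝ᵥ (A *ᵥ x) = x ⬝ᵥ (Uᵀ *ᵥ (Matrix.diagonal lam *ᵥ (U *ᵥ x))) := by
          rw [hAfact, Matrix.mulVec_mulVec, Matrix.mulVec_mulVec, Matrix.mul_assoc]
      _ = (U *ᵥ x) ⬝ᵥ (Matrix.diagonal lam *ᵥ (U *ᵥ x)) := by
          rw [Matrix.dotProduct_mulVec, Matrix.vecMul_transpose]
      _ = ∑ j, lam j * ((U *ᵥ x) j)^2 := by
          simp only [dotProduct, Matrix.mulVec_diagonal]
          exact Finset.sum_congr rfl fun j _ => by ring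
  set w : Fin k → Fin d → ℝ := fun i => U *ᵥ utld i with hw
  set c : Fin d → ℝ := fun j => ∑ i : Fin k, (w i j)^2 with hc
  have hc_nonneg : ∀ j, 0 ≤ c j := fun j => Finset.sum_nonneg fun i _ => sq_nonneg _
  have hPP : Ψᵀ * Ψ = 1 := by
    ext i j
    have h := h_orth (Fin.castLE hkd.le i) (Fin.castLE hkd.le j)
    simp only [dotProduct] at h
    simp only [Matrix.mul_apply, Matrix.transpose_apply, hΨ, Matrix.of_apply, Matrix.one_apply]
    rw [h]
    simp [Fin.castLE_inj]
  have hPtP : Ψtᵀ * Ψt = 1 := by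
    ext i j
    have h := h_orth' i j
    simp only [dotProduct] at h
    simp only [Matrix.mul_apply, Matrix.transpose_apply, hΨt, Matrix.of_apply, Matrix.one_apply]
    rw [h]
  have hsum_c : ∑ j, c j = (k : ℝ) := by
    have h1 : ∀ i : Fin k, ∑ j, (w i j)^2 = 1 := by
      intro i
      have h2 : (w i) ⬝ᵥ (w i) = 1 := by
        rw [hw]; dsimp only; rw [hUiso]; simpa using h_orth' i i
      simpa [dotProduct, sq] using h2
    calc ∑ j, c j = ∑ j, ∑ i : Fin k, (w i j)^2 := rfl
      _ = ∑ i : Fin k, ∑ j, (w i j)^2 := Finset.sum_comm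
      _ = ∑ _i : Fin k, (1:ℝ) := Finset.sum_congr rfl fun i _ => h1 i
      _ = k := by simp
  have hc_le : ∀ j, c j ≤ 1 := by
    intro j
    set q : Fin k → ℝ := Ψtᵀ *ᵥ u j with hq'
    have hq : ∀ i, q i = w i j := by
      intro i
      simp only [hq', hw, Matrix.mulVec, dotProduct, Matrix.transpose_apply, hΨt,
        Matrix.of_apply, hU]
      exact Finset.sum_congr rfl fun s _ => mul_comm _ _
    have hcq : c j = q ⬝ᵥ q := by
      simp only [hc, dotProduct, hq, sq]
    set p : Fin d → ℝ := Ψt *ᵥ q with hp'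
    have h1 : u j ⬝ᵥ p = c j := by
      rw [hp', Matrix.dotProduct_mulVec, ← Matrix.mulVec_transpose, ← hq', hcq]
    have hp2 : Ψtᵀ *ᵥ p = q := by
      rw [hp', Matrix.mulVec_mulVec, hPtP, Matrix.one_mulVec]
    have h2 : p ⬝ᵥ p = c j := by
      calc p ⬝ᵥ p = (p ᵥ* Ψt) ⬝ᵥ q := by rw [hp']; exact Matrix.dotProduct_mulVec p Ψt q
        _ = (Ψtᵀ *ᵥ p) ⬝ᵥ q := by rw [Matrix.mulVec_transpose]
        _ = q ⬝ᵥ q := by rw [hp2]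
        _ = c j := hcq.symm
    have hCS : (u j ⬝ᵥ p)^2 ≤ (u j ⬝ᵥ u j) * (p ⬝ᵥ p) := by
      simpa [dotProduct, sq] using
        Finset.sum_mul_sq_le_sq_mul_sq Finset.univ (u j) p
    have huj : u j ⬝ᵥ u j = 1 := by simpa using h_orth j j
    rw [h1, h2, huj] at hCS
    nlinarith [hc_nonneg j, hCS]
  have htr : ∑ i, utld i ⬝ᵥ (A *ᵥ utld i) = ∑ j, lam j * c j := by
    calc ∑ i, utld i ⬝ᵥ (A *ᵥ utld i) = ∑ i : Fin k, ∑ j, lam j * (w i j)^2 :=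
          Finset.sum_congr rfl fun i _ => hquad (utld i)
      _ = ∑ j, ∑ i : Fin k, lam j * (w i j)^2 := Finset.sum_comm
      _ = ∑ j, lam j * c j := by
          refine Finset.sum_congr rfl fun j _ => ?_
          simp only [hc]
          rw [Finset.mul_sum]
  set S : ℝ := ∑ j : Fin k, c (Fin.castLE hkd.le j) with hS
  have hkey : (lamk - lamkm) * (k - S) ≤
      ∑ j, lam j * c j - ∑ i : Fin k, lam (Fin.castLE hkd.le i) := by
    classical
    set L : ℕ → ℝ := fun n => if h : n < d then lam ⟨n, h⟩ else 0 with hL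
    set C : ℕ → ℝ := fun n => if h : n < d then c ⟨n, h⟩ else 0 with hC
    have hfin : ∀ (f : Fin d → ℝ) (g : ℕ → ℝ), (∀ n (h : n < d), g n = f ⟨n, h⟩) →
        ∑ j : Fin d, f j = ∑ n ∈ Finset.range d, g n := by
      intro f g hg
      rw [← Fin.sum_univ_eq_sum_range g d]
      exact Finset.sum_congr rfl fun j _ => (hg j.1 j.2).symm
    have hfink : ∀ (f : Fin d → ℝ) (g : ℕ → ℝ), (∀ n (h : n < d), g n = f ⟨n, h⟩) →
        ∑ j : Fin k, f (Fin.castLE hkd.le j) = ∑ n ∈ Finset.range k, g n := by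
      intro f g hg
      rw [← Fin.sum_univ_eq_sum_range g k]
      exact Finset.sum_congr rfl fun j _ => (hg j.1 (lt_of_lt_of_le j.2 hkd.le)).symm
    have hCd : ∑ n ∈ Finset.range d, C n = (k : ℝ) := by
      rw [← hfin c C (fun n h => dif_pos h)]; exact hsum_c
    have hSC : S = ∑ n ∈ Finset.range k, C n := hfink c C (fun n h => dif_pos h)
    have hlamsum : ∑ i : Fin k, lam (Fin.castLE hkd.le i) = ∑ n ∈ Finset.range k, L n :=
      hfink lam L (fun n h => dif_pos h)
    have hmain : ∑ j : Fin d, lam j * c j = ∑ n ∈ Finset.range d, L n * C n :=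
      hfin _ (fun n => L n * C n) (fun n h => by
        simp only [hL, hC, dif_pos h])
    have hsplit : ∀ g : ℕ → ℝ, ∑ n ∈ Finset.range d, g n
        = ∑ n ∈ Finset.range k, g n + ∑ n ∈ Finset.Ico k d, g n := by
      intro g
      rw [Finset.range_eq_Ico, Finset.range_eq_Ico]
      exact (Finset.sum_Ico_consecutive g (Nat.zero_le k) hkd.le).symm
    have hLmono : ∀ m n : ℕ, m ≤ n → n < d → L m ≤ L n := by
      intro m n hmn hn
      simp only [hL, dif_pos (lt_of_le_of_lt hmn hn), dif_pos hn]
      exact hlam_mono (Fin.mk_le_mk.mpr hmn)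
    have hCnn : ∀ n, 0 ≤ C n := by
      intro n
      simp only [hC]
      split
      · exact hc_nonneg _
      · exact le_refl 0
    have hCle1 : ∀ n, C n ≤ 1 := by
      intro n
      simp only [hC]
      split
      · exact hc_le _
      · exact zero_le_one
    have hLkm : L (k - 1) = lamkm := by simp only [hL, dif_pos hkd']; rfl
    have hLk : L k = lamk := by simp only [hL, dif_pos hkd]; rfl
    have h1 : ∀ n ∈ Finset.range k, L (k-1) * (C n - 1) ≤ L n * C n - L n := by
      intro n hn
      have hnk : n < k := Finset.mem_range.mp hn
      have hLn : L n ≤ L (k-1) := hLmono n (k-1) (by omega) (by omega)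
      nlinarith [mul_nonneg (sub_nonneg.mpr hLn) (sub_nonneg.mpr (hCle1 n))]
    have h2 : ∀ n ∈ Finset.Ico k d, L k * C n ≤ L n * C n := by
      intro n hn
      have := Finset.mem_Ico.mp hn
      exact mul_le_mul_of_nonneg_right (hLmono k n this.1 this.2) (hCnn n)
    have hsum1 : L (k-1) * ((∑ n ∈ Finset.range k, C n) - k)
        ≤ (∑ n ∈ Finset.range k, L n * C n) - ∑ n ∈ Finset.range k, L n := by
      have := Finset.sum_le_sum h1
      calc L (k-1) * ((∑ n ∈ Finset.range k, C n) - k)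
          = ∑ n ∈ Finset.range k, L (k-1) * (C n - 1) := by
            rw [← Finset.mul_sum]
            congr 1
            rw [Finset.sum_sub_distrib, Finset.sum_const, Finset.card_range]
            simp
        _ ≤ ∑ n ∈ Finset.range k, (L n * C n - L n) := this
        _ = _ := Finset.sum_sub_distrib _ _
    have hIcoC : ∑ n ∈ Finset.Ico k d, C n = (k : ℝ) - ∑ n ∈ Finset.range k, C n := by
      have := hsplit C
      linarith [hCd]
    have hsum2 : L k * ((k : ℝ) - ∑ n ∈ Finset.range k, C n)
        ≤ ∑ n ∈ Finset.Ico k d, L n * C n := by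
      calc L k * ((k : ℝ) - ∑ n ∈ Finset.range k, C n)
          = ∑ n ∈ Finset.Ico k d, L k * C n := by rw [← Finset.mul_sum, hIcoC]
        _ ≤ _ := Finset.sum_le_sum h2
    rw [hmain, hlamsum, hsplit (fun n => L n * C n), hSC]
    rw [hLkm] at hsum1
    rw [hLk] at hsum2
    set Sk := ∑ n ∈ Finset.range k, C n
    ring_nf at hsum1 hsum2 ⊢
    linarith [hsum1, hsum2]
  have hF2 : ∑ s, ∑ t, (((Ψ * Ψᵀ - Ψt * Ψtᵀ)) s t)^2 = 2 * (k : ℝ) - 2 * S := by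
    set B : Matrix (Fin k) (Fin k) ℝ := Ψᵀ * Ψt with hB
    have hBS : ∑ j : Fin k, ∑ i : Fin k, (B j i)^2 = S := by
      rw [hS]
      refine Finset.sum_congr rfl fun j _ => ?_
      simp only [hc]
      refine Finset.sum_congr rfl fun i _ => ?_
      congr 1
      simp only [hB, Matrix.mul_apply, Matrix.transpose_apply, hΨ, hΨt, Matrix.of_apply,
        hw, hU, Matrix.mulVec, dotProduct]
    set M := Ψ * Ψᵀ - Ψt * Ψtᵀ with hM
    have hMsymm : Mᵀ = M := by
      simp [hM, Matrix.transpose_sub, Matrix.transpose_mul]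
    have hMsym' : ∀ a b, M a b = M b a := by
      intro a b
      conv_lhs => rw [← hMsymm]
      rfl
    have e1 : ∑ s, ∑ t, (M s t)^2 = Matrix.trace (M * M) := by
      simp only [Matrix.trace, Matrix.diag, Matrix.mul_apply]
      refine Finset.sum_congr rfl fun s _ => Finset.sum_congr rfl fun t _ => ?_
      rw [sq, hMsym' s t]
    have hPP2 : Ψ * Ψᵀ * (Ψ * Ψᵀ) = Ψ * Ψᵀ := by
      rw [Matrix.mul_assoc, ← Matrix.mul_assoc Ψᵀ Ψ Ψᵀ, hPP, Matrix.one_mul]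
    have hQQ2 : Ψt * Ψtᵀ * (Ψt * Ψtᵀ) = Ψt * Ψtᵀ := by
      rw [Matrix.mul_assoc, ← Matrix.mul_assoc Ψtᵀ Ψt Ψtᵀ, hPtP, Matrix.one_mul]
    have tPP : Matrix.trace (Ψ * Ψᵀ * (Ψ * Ψᵀ)) = (k : ℝ) := by
      rw [hPP2, Matrix.trace_mul_comm, hPP, Matrix.trace_one]
      simp
    have tQQ : Matrix.trace (Ψt * Ψtᵀ * (Ψt * Ψtᵀ)) = (k : ℝ) := by
      rw [hQQ2, Matrix.trace_mul_comm, hPtP, Matrix.trace_one]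
      simp
    have tPQ : Matrix.trace (Ψ * Ψᵀ * (Ψt * Ψtᵀ)) = S := by
      have e2 : Ψ * Ψᵀ * (Ψt * Ψtᵀ) = Ψ * (Ψᵀ * Ψt * Ψtᵀ) := by
        simp only [Matrix.mul_assoc]
      rw [e2, Matrix.trace_mul_comm]
      have e3 : Ψᵀ * Ψt * Ψtᵀ * Ψ = B * Bᵀ := by
        rw [hB, Matrix.transpose_mul, Matrix.transpose_transpose, Matrix.mul_assoc]
      rw [e3, ← hBS]
      simp only [Matrix.trace, Matrix.diag, Matrix.mul_apply, Matrix.transpose_apply]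
      exact Finset.sum_congr rfl fun j _ => Finset.sum_congr rfl fun i _ => (sq (B j i)).symm
    have tQP : Matrix.trace (Ψt * Ψtᵀ * (Ψ * Ψᵀ)) = S := by
      rw [Matrix.trace_mul_comm]
      exact tPQ
    have e4 : M * M = Ψ * Ψᵀ * (Ψ * Ψᵀ) - Ψ * Ψᵀ * (Ψt * Ψtᵀ) - Ψt * Ψtᵀ * (Ψ * Ψᵀ)
        + Ψt * Ψtᵀ * (Ψt * Ψtᵀ) := by
      rw [hM]
      noncomm_ring
    rw [e1, e4]
    rw [Matrix.trace_add, Matrix.trace_sub, Matrix.trace_sub, tPP, tQQ, tPQ, tQP]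
    ring
  -- assemble
  have hkSlt : (k : ℝ) - S < ε / (lamk - lamkm) := by
    rw [lt_div_iff₀ hgappos]
    have h1 : (lamk - lamkm) * ((k:ℝ) - S) < ε := by
      calc (lamk - lamkm) * ((k:ℝ) - S) ≤ _ := hkey
        _ < ε := by rwa [htr] at hgdo
    linarith [h1]
  have hF2lt : ∑ s, ∑ t, (((Ψ * Ψᵀ - Ψt * Ψtᵀ)) s t)^2 < 2 * ε / (lamk - lamkm) := by
    rw [hF2]
    have h2 : 2 * ε / (lamk - lamkm) = 2 * (ε / (lamk - lamkm)) := by ring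
    rw [h2]
    linarith [hkSlt]
  have hF2nn : (0:ℝ) ≤ ∑ s, ∑ t, (((Ψ * Ψᵀ - Ψt * Ψtᵀ)) s t)^2 :=
    Finset.sum_nonneg fun s _ => Finset.sum_nonneg fun t _ => sq_nonneg _
  calc specNorm (Ψ * Ψᵀ - Ψt * Ψtᵀ)
      ≤ Real.sqrt (∑ s, ∑ t, (((Ψ * Ψᵀ - Ψt * Ψtᵀ)) s t)^2) :=
        specNorm_le_frob (by omega) _
    _ < Real.sqrt (2 * ε / (lamk - lamkm)) := Real.sqrt_lt_sqrt hF2nn hF2lt
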